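/- Let A₁ be an (m+1)×(m+1) complex matrix with block form A₁ = [[A₁⁰, a₁],[a₁*, a₁⁰]] where A₁⁰ is m×m, a₁ is an m-column vector, a₁* its conjugate transpose (a row vector), and a₁⁰ a scalar; and let A₂ be an (n+1)×(n+1) matrix with block form A₂ = [[a₂⁰, a₂*],[a₂, A₂⁰]] where A₂⁰ is n×n. Define the (m+n+1)×(m+n+1) matrix = [[A₁⁰, a₁, 0],[a₁*, a₁⁰+a₂⁰, a₂*],[0, a₂, A₂⁰]]. Then det = det A₁ · det A₂⁰ + det A₁⁰ · det A₂. -/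

import Mathlib

open Matrix

theorem single_vertex_join_det (m n : ℕ)
    (A₁0 : Matrix (Fin m) (Fin m) ℂ) (a₁ : Matrix (Fin m) Unit ℂ) (a₁0 : ℂ)
    (A₂0 : Matrix (Fin n) (Fin n) ℂ) (a₂ : Matrix (Fin n) Unit ℂ) (a₂0 : ℂ)
    (A₁ : Matrix (Fin m ⊕ Unit) (Fin m ⊕ Unit) ℂ)
    (A₂ : Matrix (Unit ⊕ Fin n) (Unit ⊕ Fin n) ℂ)
    (Ahat : Matrix ((Fin m ⊕ Unit) ⊕ Fin n) ((Fin m ⊕ Unit) ⊕ Fin n) ℂ)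
    (hA₁ : A₁ = fromBlocks A₁0 a₁ a₁ᴴ (Matrix.of fun _ _ => a₁0))
    (hA₂ : A₂ = fromBlocks (Matrix.of fun _ _ => a₂0) a₂ᴴ a₂ A₂0)
    (hAhat : Ahat = fromBlocks
        (fromBlocks A₁0 a₁ a₁ᴴ (Matrix.of fun _ _ => a₁0 + a₂0))
        (fromRows 0 a₂ᴴ) (fromCols 0 a₂) A₂0) :
    Ahat.det = A₁.det * A₂0.det + A₁0.det * A₂.det := by
  set i0 : (Fin m ⊕ Unit) ⊕ Fin n := Sum.inl (Sum.inr ()) with hi0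
  set u : (Fin m ⊕ Unit) ⊕ Fin n → ℂ :=
    Sum.elim (Sum.elim (fun j => a₁ᴴ () j) (fun _ => a₁0)) 0 with hu
  set v : (Fin m ⊕ Unit) ⊕ Fin n → ℂ :=
    Sum.elim (Sum.elim 0 (fun _ => a₂0)) (fun j => a₂ᴴ () j) with hv
  have hrow : Ahat = Ahat.updateRow i0 (u + v) := by
    ext i j
    rcases i with (i | i) | i <;> rcases j with (j | j) | j <;>
      simp [hi0, hAhat, hu, hv, updateRow_apply, fromBlocks]
  have h1 : Ahat.updateRow i0 u =
      fromBlocks A₁ 0 (fromCols 0 a₂) A₂0 := by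
    ext i j
    rcases i with (i | i) | i <;> rcases j with (j | j) | j <;>
      simp [hi0, hAhat, hA₁, hu, updateRow_apply, fromBlocks]
  have h2 : Ahat.updateRow i0 v =
      (fromBlocks A₁0 (fromCols a₁ 0) 0 A₂).submatrix
        (Equiv.sumAssoc (Fin m) Unit (Fin n)) (Equiv.sumAssoc (Fin m) Unit (Fin n)) := by
    ext i j
    rcases i with (i | i) | i <;> rcases j with (j | j) | j <;>
      simp [hi0, hAhat, hA₂, hv, updateRow_apply, fromBlocks, Equiv.sumAssoc]
  rw [hrow, det_updateRow_add, h1, h2, det_fromBlocks_zero₁₂,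
    det_submatrix_equiv_self, det_fromBlocks_zero₂₁]
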